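/- Fix integers d ≥ 1, N ≥ 1, K ≥ 1. The partial trace over the last K tensor factors of the symmetric projector satisfies Tr_O(Π_sym^{(N+K)}) = (d_S^{N+K} / d_S^N) · Π_sym^{(N)}, where Tr_O(J)(x,x') := ∑_o J((x,o),(x',o)) for o ranging over Fin K → Fin d. -/

import Mathlib

open Matrix Kronecker BigOperators ComplexOrder

noncomputable section

/-- The matrix of the permutation `π ∈ S_M` acting on the `M` tensor factors of `(ℂ^d)^{⊗M}`. -/
def permMat (d M : ℕ) (π : Equiv.Perm (Fin M)) :
    Matrix (Fin M → Fin d) (Fin M → Fin d) ℂ :=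
  Matrix.of fun x y => if x = y ∘ π.symm then 1 else 0

/-- The orthogonal projector onto the symmetric subspace of `(ℂ^d)^{⊗M}`. -/
def symProj (d M : ℕ) : Matrix (Fin M → Fin d) (Fin M → Fin d) ℂ :=
  ((M.factorial : ℂ))⁻¹ • ∑ π : Equiv.Perm (Fin M), permMat d M π

/-- The dimension `d_S^M = binom(M+d-1, d-1)` of the symmetric subspace of `(ℂ^d)^{⊗M}`. -/
def dS (d M : ℕ) : ℕ := (M + d - 1).choose (d - 1)

/-- Regard a pair of tuples as a single tuple via `Fin (N+K) ≃ Fin N ⊕ Fin K`. -/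
def pairToFun (d N K : ℕ) (x : Fin N → Fin d) (o : Fin K → Fin d) :
    Fin (N + K) → Fin d :=
  fun i => Sum.elim x o (finSumFinEquiv.symm i)

/-- The projector onto the symmetric subspace of `(ℂ^d)^{⊗(N+K)}`, regarded as a matrix
indexed by pairs `((x,o),(x',o'))`. -/
def symProjNK (d N K : ℕ) :
    Matrix ((Fin N → Fin d) × (Fin K → Fin d)) ((Fin N → Fin d) × (Fin K → Fin d)) ℂ :=
  Matrix.of fun p q =>
    symProj d (N + K) (pairToFun d N K p.1 p.2) (pairToFun d N K q.1 q.2)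

/-- Partial trace over the output (second) factor. -/
def trOut {d N K : ℕ}
    (J : Matrix ((Fin N → Fin d) × (Fin K → Fin d)) ((Fin N → Fin d) × (Fin K → Fin d)) ℂ) :
    Matrix (Fin N → Fin d) (Fin N → Fin d) ℂ :=
  Matrix.of fun x x' => ∑ o : Fin K → Fin d, J (x, o) (x', o)

section Aux

open Finset

variable {ι : Type*} [Fintype ι] [DecidableEq ι] {d : ℕ}

/-- The number of occurrences of the value `b` in the tuple `f`. -/
def cnt (f : ι → Fin d) (b : Fin d) : ℕ := (Finset.univ.filter fun i => f i = b).card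

omit [DecidableEq ι] in
lemma cnt_eq_card (f : ι → Fin d) (b : Fin d) : cnt f b = Fintype.card {i // f i = b} :=
  (Fintype.card_subtype _).symm

omit [DecidableEq ι] in
lemma cnt_comp (f : ι → Fin d) (τ : Equiv.Perm ι) (b : Fin d) : cnt (f ∘ τ) b = cnt f b := by
  rw [cnt_eq_card, cnt_eq_card]
  exact Fintype.card_congr (τ.subtypeEquiv fun i => Iff.rfl)

omit [DecidableEq ι] in
lemma sum_cnt (f : ι → Fin d) : ∑ b, cnt f b = Fintype.card ι := by
  simp only [cnt, Finset.card_filter]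
  rw [Finset.sum_comm]
  simp

omit [DecidableEq ι] in
lemma exists_comp_of_cnt {f g : ι → Fin d} (h : ∀ b, cnt f b = cnt g b) :
    ∃ τ : Equiv.Perm ι, g ∘ τ = f := by
  have e : ∀ b, {i // f i = b} ≃ {i // g i = b} := fun b =>
    Fintype.equivOfCardEq (by rw [← cnt_eq_card, ← cnt_eq_card, h])
  exact ⟨Equiv.ofFiberEquiv e, funext fun i => Equiv.ofFiberEquiv_map e i⟩

/-- The number of permutations carrying the tuple `g` to the tuple `f`. -/
lemma card_perm_comp (f g : ι → Fin d) :
    Fintype.card {τ : Equiv.Perm ι // g ∘ τ = f}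
      = if ∀ b, cnt f b = cnt g b then ∏ b, (cnt g b).factorial else 0 := by
  split_ifs with h
  · obtain ⟨τ₀, hτ₀⟩ := exists_comp_of_cnt h
    have key : ∀ σ : Equiv.Perm ι, g ∘ σ = g ↔ g ∘ ⇑(σ * τ₀) = f := by
      intro σ
      constructor
      · intro hσ
        funext i
        simp only [Equiv.Perm.coe_mul, Function.comp_apply]
        rw [show g (σ (τ₀ i)) = g (τ₀ i) from congrFun hσ (τ₀ i), ← hτ₀]
        rfl
      · intro hσ
        funext j
        have := congrFun hσ (τ₀.symm j)
        simp only [Equiv.Perm.coe_mul, Function.comp_apply, Equiv.apply_symm_apply] at this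
        rw [Function.comp_apply, this, ← congrFun hτ₀ (τ₀.symm j)]
        simp
    have := Fintype.card_congr
      ((Equiv.subtypeEquiv (Equiv.mulRight τ₀) key).symm :
        {τ : Equiv.Perm ι // g ∘ τ = f} ≃ {σ : Equiv.Perm ι // g ∘ σ = g})
    rw [this, DomMulAct.stabilizer_card g]
    exact Finset.prod_congr rfl fun b _ => by rw [← cnt_eq_card]
  · rw [Fintype.card_eq_zero_iff]
    constructor
    rintro ⟨τ, hτ⟩
    exact h fun b => by rw [← hτ, cnt_comp]

lemma cnt_cons {K : ℕ} (a : Fin d) (o : Fin K → Fin d) (b : Fin d) :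
    cnt (Fin.cons a o : Fin (K + 1) → Fin d) b = (if a = b then 1 else 0) + cnt o b := by
  simp only [cnt, Finset.card_filter, Fin.sum_univ_succ, Fin.cons_zero, Fin.cons_succ]

/-- The key combinatorial sum. -/
def Fsum (e K : ℕ) (m : Fin (e + 1) → ℕ) : ℕ :=
  ∑ o : Fin K → Fin (e + 1), ∏ b, (m b + cnt o b).factorial

lemma keyF (e : ℕ) : ∀ (K : ℕ) (m : Fin (e + 1) → ℕ),
    Fsum e K m * (∑ b, m b + e).factorial
      = (∑ b, m b + K + e).factorial * ∏ b, (m b).factorial := by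
  intro K
  induction K with
  | zero =>
    intro m
    have : ∀ o : Fin 0 → Fin (e + 1), ∀ b, cnt o b = 0 := by
      intro o b; simp [cnt]
    have h0 : Fsum e 0 m = ∏ b, (m b).factorial := by
      rw [Fsum, Finset.univ_unique, Finset.sum_singleton]
      exact Finset.prod_congr rfl fun b _ => by rw [this _ b, Nat.add_zero]
    rw [h0]; ring_nf
  | succ K ih =>
    intro m
    set S := ∑ b, m b with hS
    have hsplit : Fsum e (K + 1) m
        = ∑ a : Fin (e + 1), Fsum e K (fun b => m b + if a = b then 1 else 0) := by
      rw [Fsum, ← Equiv.sum_comp (Fin.consEquiv fun _ => Fin (e + 1))]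
      rw [Fintype.sum_prod_type]
      refine Finset.sum_congr rfl fun a _ => Finset.sum_congr rfl fun o _ => ?_
      refine Finset.prod_congr rfl fun b _ => ?_
      have : (Fin.consEquiv fun _ => Fin (e+1)) (a, o) = Fin.cons a o := rfl
      rw [this, cnt_cons, Nat.add_assoc]
    have hmain : ∀ a : Fin (e + 1),
        Fsum e K (fun b => m b + if a = b then 1 else 0) * ((S + e).factorial * (S + e + 1))
          = (S + K + 1 + e).factorial * ((m a + 1) * ∏ b, (m b).factorial) := by
      intro a
      have hsum : ∑ b, (m b + if a = b then 1 else 0) = S + 1 := by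
        rw [Finset.sum_add_distrib]; simp [hS]
      have hprod : ∏ b, (m b + if a = b then 1 else 0).factorial
          = (m a + 1) * ∏ b, (m b).factorial := by
        rw [← Finset.mul_prod_erase univ _ (mem_univ a),
          ← Finset.mul_prod_erase univ (fun b => (m b).factorial) (mem_univ a)]
        rw [if_pos rfl, Nat.factorial_succ]
        rw [Finset.prod_congr rfl fun b hb => by
          rw [if_neg (Ne.symm (Finset.ne_of_mem_erase hb)), Nat.add_zero]]
        ring
      have := ih (fun b => m b + if a = b then 1 else 0)
      rw [hsum, hprod] at this
      calc Fsum e K (fun b => m b + if a = b then 1 else 0) * ((S + e).factorial * (S + e + 1))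
          = Fsum e K (fun b => m b + if a = b then 1 else 0) * (S + 1 + e).factorial := by
            rw [show S + 1 + e = S + e + 1 by ring, Nat.factorial_succ]; ring
        _ = (S + 1 + K + e).factorial * ((m a + 1) * ∏ b, (m b).factorial) := this
        _ = (S + K + 1 + e).factorial * ((m a + 1) * ∏ b, (m b).factorial) := by ring_nf
    apply Nat.eq_of_mul_eq_mul_right (Nat.succ_pos (S + e))
    calc Fsum e (K + 1) m * (S + e).factorial * (S + e + 1)
        = ∑ a : Fin (e + 1), Fsum e K (fun b => m b + if a = b then 1 else 0)
            * ((S + e).factorial * (S + e + 1)) := by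
          rw [hsplit, Finset.sum_mul, Finset.sum_mul]
          exact Finset.sum_congr rfl fun a _ => by ring
      _ = ∑ a : Fin (e + 1), (S + K + 1 + e).factorial * ((m a + 1) * ∏ b, (m b).factorial) := by
          exact Finset.sum_congr rfl fun a _ => hmain a
      _ = (S + K + 1 + e).factorial * (∏ b, (m b).factorial) * (S + e + 1) := by
          rw [← Finset.mul_sum]
          rw [show ∑ a : Fin (e+1), (m a + 1) * ∏ b, (m b).factorial
              = (∑ a : Fin (e+1), (m a + 1)) * ∏ b, (m b).factorial from (Finset.sum_mul ..).symm]
          rw [Finset.sum_add_distrib]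
          simp [← hS]
          ring
      _ = (S + (K + 1) + e).factorial * (∏ b, (m b).factorial) * (S + e + 1) := by ring_nf

lemma symProj_apply (d M : ℕ) (f g : Fin M → Fin d) :
    symProj d M f g
      = ((M.factorial : ℂ))⁻¹ * (Fintype.card {τ : Equiv.Perm (Fin M) // g ∘ τ = f} : ℂ) := by
  simp only [symProj, Matrix.smul_apply, Matrix.sum_apply, permMat, Matrix.of_apply, smul_eq_mul]
  congr 1
  rw [Fintype.card_subtype]
  rw [← Finset.sum_boole]
  refine Fintype.sum_bijective (fun π : Equiv.Perm (Fin M) => π⁻¹)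
    (Equiv.inv (Equiv.Perm (Fin M))).bijective _ _ (fun π => ?_)
  have h1 : (⇑(π⁻¹) : Fin M → Fin M) = ⇑π.symm := rfl
  rw [h1]
  exact if_congr eq_comm rfl rfl

lemma cnt_pair (d N K : ℕ) (x : Fin N → Fin d) (o : Fin K → Fin d) (b : Fin d) :
    cnt (pairToFun d N K x o) b = cnt x b + cnt o b := by
  simp only [cnt, Finset.card_filter]
  rw [← Equiv.sum_comp finSumFinEquiv
    (fun i => if pairToFun d N K x o i = b then 1 else 0)]
  rw [Fintype.sum_sum_type]
  simp [pairToFun]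

end Aux

/-- Partial trace of the symmetric projector over the last `K` factors:
`Tr_O(Π_sym^{(N+K)}) = (d_S^{N+K} / d_S^N) Π_sym^{(N)}`. -/
theorem stmt3 (d N K : ℕ) (hd : 1 ≤ d) (hN : 1 ≤ N) (hK : 1 ≤ K) :
    trOut (symProjNK d N K) = ((dS d (N + K) : ℂ) / (dS d N : ℂ)) • symProj d N := by
  obtain ⟨e, rfl⟩ : ∃ e, d = e + 1 := ⟨d - 1, by omega⟩
  have hdS : ∀ M : ℕ, dS (e + 1) M = (M + e).choose e := by
    intro M; simp [dS]
  ext x x'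
  simp only [trOut, symProjNK, Matrix.of_apply, Matrix.smul_apply, smul_eq_mul]
  simp only [symProj_apply, card_perm_comp]
  have hcond : ∀ o : Fin K → Fin (e + 1),
      (∀ b, cnt (pairToFun (e+1) N K x o) b = cnt (pairToFun (e+1) N K x' o) b)
        ↔ (∀ b, cnt x b = cnt x' b) := by
    intro o
    constructor <;> intro h b <;> have hb := h b <;>
      simp only [cnt_pair] at hb ⊢ <;> omega
  by_cases h : ∀ b, cnt x b = cnt x' b
  · -- main case
    set m : Fin (e + 1) → ℕ := fun b => cnt x' b with hm
    have hLHS : ∑ o : Fin K → Fin (e + 1),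
        ((N + K).factorial : ℂ)⁻¹ *
          ((if ∀ b, cnt (pairToFun (e+1) N K x o) b = cnt (pairToFun (e+1) N K x' o) b
            then ∏ b, (cnt (pairToFun (e+1) N K x' o) b).factorial else 0 : ℕ) : ℂ)
        = ((N + K).factorial : ℂ)⁻¹ * (Fsum e K m : ℂ) := by
      rw [← Finset.mul_sum]
      congr 1
      rw [Fsum]
      push_cast
      refine Finset.sum_congr rfl fun o _ => ?_
      rw [if_pos ((hcond o).mpr h)]
      push_cast
      exact Finset.prod_congr rfl fun b _ => by rw [cnt_pair]
    rw [hLHS, if_pos h]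
    have hsm : ∑ b, m b = N := by
      rw [hm, sum_cnt, Fintype.card_fin]
    have hF : Fsum e K m * (N + e).factorial = (N + K + e).factorial * ∏ b, (m b).factorial := by
      have := keyF e K m
      rwa [hsm] at this
    have hC1 : dS (e + 1) N * (e.factorial * N.factorial) = (N + e).factorial := by
      rw [hdS]
      have := Nat.choose_mul_factorial_mul_factorial (Nat.le_add_left e N)
      simp only [Nat.add_sub_cancel] at this
      rw [← this]; ring
    have hC2 : dS (e + 1) (N + K) * (e.factorial * (N + K).factorial)
        = (N + K + e).factorial := by
      rw [hdS]
      have := Nat.choose_mul_factorial_mul_factorial (Nat.le_add_left e (N + K))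
      simp only [Nat.add_sub_cancel] at this
      rw [← this]; ring
    have hF' : (Fsum e K m : ℂ) * ((N + e).factorial : ℂ)
        = ((N + K + e).factorial : ℂ) * (∏ b, ((m b).factorial : ℂ)) := by
      exact_mod_cast congrArg (Nat.cast : ℕ → ℂ) hF
    have hC1' : (dS (e + 1) N : ℂ) * ((e.factorial : ℂ) * (N.factorial : ℂ))
        = ((N + e).factorial : ℂ) := by exact_mod_cast congrArg (Nat.cast : ℕ → ℂ) hC1
    have hC2' : (dS (e + 1) (N + K) : ℂ) * ((e.factorial : ℂ) * ((N + K).factorial : ℂ))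
        = ((N + K + e).factorial : ℂ) := by exact_mod_cast congrArg (Nat.cast : ℕ → ℂ) hC2
    have hM0 : (((N + K).factorial : ℕ) : ℂ) ≠ 0 :=
      Nat.cast_ne_zero.mpr (Nat.factorial_ne_zero _)
    have hN0 : ((N.factorial : ℕ) : ℂ) ≠ 0 := Nat.cast_ne_zero.mpr (Nat.factorial_ne_zero _)
    have he0 : ((e.factorial : ℕ) : ℂ) ≠ 0 := Nat.cast_ne_zero.mpr (Nat.factorial_ne_zero _)
    have hd1 : ((dS (e + 1) N : ℕ) : ℂ) ≠ 0 := by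
      rw [hdS]
      exact Nat.cast_ne_zero.mpr (Nat.choose_pos (Nat.le_add_left e N)).ne'
    have G : (Fsum e K m : ℂ) * (dS (e + 1) N : ℂ) * (N.factorial : ℂ)
        = (∏ b, ((m b).factorial : ℂ)) * (dS (e + 1) (N + K) : ℂ) * ((N + K).factorial : ℂ) := by
      apply mul_right_cancel₀ he0
      linear_combination hF' + (Fsum e K m : ℂ) * hC1'
        - (∏ b, ((m b).factorial : ℂ)) * hC2'
    push_cast
    field_simp
    linear_combination G
  · rw [if_neg h]
    have : ∀ o : Fin K → Fin (e + 1),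
        ((N + K).factorial : ℂ)⁻¹ *
          ((if ∀ b, cnt (pairToFun (e+1) N K x o) b = cnt (pairToFun (e+1) N K x' o) b
            then ∏ b, (cnt (pairToFun (e+1) N K x' o) b).factorial else 0 : ℕ) : ℂ) = 0 := by
      intro o
      rw [if_neg (fun hc => h ((hcond o).mp hc))]
      simp
    rw [Finset.sum_congr rfl fun o _ => this o]
    simp

end
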